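/- Let p ∈ Σ_m, q ∈ Σ_n, let K be a set of keypoint index pairs with mask matrix M, and suppose p_i = q_j for every (i,j) ∈ K. Then for every π ∈ Π(p,q;M) and every (i,j) ∈ K one has: (M⊙π)_{i,j'} = 0 for all j' ≠ j, (M⊙π)_{i',j} = 0 for all i' ≠ i, and (M⊙π)_{i,j} = p_i = q_j. In other words, the masked transport plan M⊙π sends all the mass of each source keypoint to its paired target keypoint, and each target keypoint receives mass only from its paired source keypoint. -/
import Mathlib


open Finset

noncomputable section

variable {m n : ℕ}

/-- Mask matrix determined by the keypoint pair set `K`: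
`M i j = 1` if `(i,j) ∈ K`; `M i j = 0` if `i ∈ I` or `j ∈ J` but `(i,j) ∉ K`;
`M i j = 1` otherwise. -/
def mask (K : Finset (Fin m × Fin n)) : Matrix (Fin m) (Fin n) ℝ :=
  fun i j =>
    if (i, j) ∈ K then 1
    else if (∃ j', (i, j') ∈ K) ∨ (∃ i', (i', j) ∈ K) then 0
    else 1

/-- The masked feasible set `Π(p, q; M)`. -/
def PiM (M : Matrix (Fin m) (Fin n) ℝ) (p : Fin m → ℝ) (q : Fin n → ℝ) :
    Set (Matrix (Fin m) (Fin n) ℝ) :=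
  {π | (∀ i j, 0 ≤ π i j) ∧ (∀ i, ∑ j, M i j * π i j = p i) ∧
    (∀ j, ∑ i, M i j * π i j = q j)}

/-- if `p i = q j` for every keypoint pair `(i,j) ∈ K`, then any
`π ∈ Π(p,q;M)` preserves the matching of keypoint pairs: the masked plan `M ⊙ π`
vanishes off the keypoint entry in the corresponding row and column, and the
keypoint entry carries the whole mass `p i = q j`. -/
theorem masked_plan_preserves_keypoint_matching
    (p : Fin m → ℝ) (q : Fin n → ℝ) (K : Finset (Fin m × Fin n))
    (hp : p ∈ stdSimplex ℝ (Fin m)) (hq : q ∈ stdSimplex ℝ (Fin n))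
    (hK1 : ∀ a ∈ K, ∀ b ∈ K, a.1 = b.1 → a = b)
    (hK2 : ∀ a ∈ K, ∀ b ∈ K, a.2 = b.2 → a = b)
    (hpq : ∀ ij ∈ K, p ij.1 = q ij.2)
    (π : Matrix (Fin m) (Fin n) ℝ) (hπ : π ∈ PiM (mask K) p q) :
    ∀ ij ∈ K,
      (∀ j', j' ≠ ij.2 → mask K ij.1 j' * π ij.1 j' = 0) ∧
      (∀ i', i' ≠ ij.1 → mask K i' ij.2 * π i' ij.2 = 0) ∧
      mask K ij.1 ij.2 * π ij.1 ij.2 = p ij.1 ∧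
      mask K ij.1 ij.2 * π ij.1 ij.2 = q ij.2 := by
  intro ij hij
  obtain ⟨i, j⟩ := ij
  have hrow0 : ∀ j', j' ≠ j → mask K i j' * π i j' = 0 := by
    intro j' hj'
    have hnot : (i, j') ∉ K := by
      intro h
      exact hj' (congrArg Prod.snd (hK1 _ h _ hij rfl))
    have : mask K i j' = 0 := by
      simp only [mask, if_neg hnot]
      exact if_pos (Or.inl ⟨j, hij⟩)
    rw [this, zero_mul]
  have hcol0 : ∀ i', i' ≠ i → mask K i' j * π i' j = 0 := by
    intro i' hi'
    have hnot : (i', j) ∉ K := by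
      intro h
      exact hi' (congrArg Prod.fst (hK2 _ h _ hij rfl))
    have : mask K i' j = 0 := by
      simp only [mask, if_neg hnot]
      exact if_pos (Or.inr ⟨i, hij⟩)
    rw [this, zero_mul]
  refine ⟨hrow0, hcol0, ?_, ?_⟩
  · have := hπ.2.1 i
    rw [← this, Finset.sum_eq_single j]
    · intro b _ hb; exact hrow0 b hb
    · intro hb; exact absurd (Finset.mem_univ j) hb
  · have := hπ.2.2 j
    rw [← this, Finset.sum_eq_single i]
    · intro b _ hb; exact hcol0 b hb
    · intro hb; exact absurd (Finset.mem_univ i) hb
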